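/- Let 𝒮 be a set of homogeneous multilinear polynomials with integer coefficients: each element of 𝒮 is, for some m ≥ 2, a polynomial P(X_1, …, X_m) = Σ_{σ ∈ S_m} c_σ X_{σ(1)}⋯X_{σ(m)} with c_σ ∈ ℤ. Then there exists a noncommutative ring R for which every element of 𝒮 is a polynomial identity if and only if there is a single prime p such that every P(X_1,…,X_m) = Σ_{σ ∈ S_m} c_σ X_{σ(1)}⋯X_{σ(m)} in 𝒮 satisfies: (1) p divides P(1,1,…,1) = Σ_{σ ∈ S_m} c_σ, and (2) p divides Θ_{i,j}(P) := Σ_{σ ∈ S_m, σ⁻¹(i) < σ⁻¹(j)} c_σ for all 1 ≤ i < j ≤ m. Moreover, if such a prime p exists, then every element of 𝒮 is a polynomial identity for the noncommutative ring 𝔽_p⟨U,V⟩/(U², V², UV). -/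

import Mathlib

universe u

open FreeAlgebra

/-- The relation on `𝔽_p⟨U,V⟩` identifying `U²`, `V²` and `UV` with `0`. -/
def relUV (p : ℕ) : FreeAlgebra (ZMod p) (Fin 2) → FreeAlgebra (ZMod p) (Fin 2) → Prop :=
  fun a b => b = 0 ∧
    (a = ι (ZMod p) 0 ^ 2 ∨ a = ι (ZMod p) 1 ^ 2 ∨ a = ι (ZMod p) 0 * ι (ZMod p) 1)

/-- The ring `𝔽_p⟨U,V⟩/(U², V², UV)`. -/
abbrev UVRing (p : ℕ) := RingQuot (relUV p)

inductive L5 : Type where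
  | e | a | b | w | z
  deriving DecidableEq

namespace L5

def mul5 : L5 → L5 → L5
  | e, x => x
  | x, e => x
  | z, _ => z
  | _, z => z
  | b, a => w
  | _, _ => z

instance : Monoid L5 where
  mul := mul5
  one := e
  mul_assoc := by rintro ⟨⟩ ⟨⟩ ⟨⟩ <;> rfl
  one_mul := by rintro ⟨⟩ <;> rfl
  mul_one := by rintro ⟨⟩ <;> rfl

end L5


namespace L5

def ω : L5 → ℕ
  | e => 0
  | a => 1
  | b => 1
  | w => 2
  | z => 3

lemma ω_mul : ∀ x y : L5, min 3 (ω x + ω y) ≤ ω (x * y) := by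
  rintro ⟨⟩ ⟨⟩ <;> decide

lemma ω_prod : ∀ l : List L5, min 3 (l.map ω).sum ≤ ω l.prod := by
  intro l
  induction l with
  | nil => simp [ω, (rfl : (1 : L5) = e)]
  | cons x l ih =>
    rw [List.prod_cons, List.map_cons, List.sum_cons]
    have h2 := ω_mul x l.prod
    omega

lemma eq_z_of_ω : ∀ x : L5, 3 ≤ ω x → x = z := by rintro ⟨⟩ <;> decide

lemma one_le_ω : ∀ x : L5, x ≠ e → 1 ≤ ω x := by rintro ⟨⟩ <;> decide

end L5

section Monoidlemmas
variable {M : Type*} [Monoid M]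

lemma ofFn_prod_eq_one : ∀ {m : ℕ} (f : Fin m → M), (∀ t, f t = 1) →
    (List.ofFn f).prod = 1 := by
  intro m f h
  apply List.prod_eq_one
  intro x hx
  rw [List.mem_ofFn] at hx
  obtain ⟨t, rfl⟩ := hx
  exact h t

lemma ofFn_prod_single : ∀ {m : ℕ} (f : Fin m → M) (t₀ : Fin m),
    (∀ t, t ≠ t₀ → f t = 1) → (List.ofFn f).prod = f t₀ := by
  intro m
  induction m with
  | zero => exact fun f t₀ _ => t₀.elim0
  | succ k ih =>
    intro f t₀ h
    rw [List.ofFn_succ, List.prod_cons]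
    rcases Fin.eq_zero_or_eq_succ t₀ with rfl | ⟨t', rfl⟩
    · rw [ofFn_prod_eq_one (fun t => f t.succ) (fun t => h t.succ (Fin.succ_ne_zero t)),
        mul_one]
    · rw [h 0 (Ne.symm (Fin.succ_ne_zero t')), one_mul]
      exact ih (fun t => f t.succ) t' (fun t ht => h t.succ (by simpa using ht))

lemma ofFn_prod_pair : ∀ {m : ℕ} (f : Fin m → M) (t₁ t₂ : Fin m), t₁ < t₂ →
    (∀ t, t ≠ t₁ → t ≠ t₂ → f t = 1) → (List.ofFn f).prod = f t₁ * f t₂ := by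
  intro m
  induction m with
  | zero => exact fun f t₁ _ _ _ => t₁.elim0
  | succ k ih =>
    intro f t₁ t₂ h12 h
    rw [List.ofFn_succ, List.prod_cons]
    rcases Fin.eq_zero_or_eq_succ t₁ with rfl | ⟨t₁', rfl⟩
    · obtain ⟨t₂', rfl⟩ := Fin.eq_succ_of_ne_zero (by rintro rfl; exact absurd h12 (lt_irrefl _) : t₂ ≠ 0)
      rw [ofFn_prod_single (fun t => f t.succ) t₂'
        (fun t ht => h t.succ (Fin.succ_ne_zero t) (by simpa using ht))]
    · obtain ⟨t₂', rfl⟩ := Fin.eq_succ_of_ne_zero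
        (by rintro rfl; exact absurd (lt_trans (Fin.succ_pos t₁') h12) (lt_irrefl _) : t₂ ≠ 0)
      rw [h 0 (Ne.symm (Fin.succ_ne_zero t₁')) (Ne.symm (Fin.succ_ne_zero t₂')), one_mul]
      refine ih (fun t => f t.succ) t₁' t₂' (by simpa using h12)
        (fun t ht1 ht2 => h t.succ (by simpa using ht1) (by simpa using ht2))

end Monoidlemmas

namespace UVAux

variable (p : ℕ)

noncomputable def uu : UVRing p := RingQuot.mkAlgHom (ZMod p) (relUV p) (ι (ZMod p) 0)
noncomputable def vv : UVRing p := RingQuot.mkAlgHom (ZMod p) (relUV p) (ι (ZMod p) 1)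

lemma u_mul_u : uu p * uu p = 0 := by
  have h := RingQuot.mkAlgHom_rel (ZMod p) (s := relUV p)
    (x := ι (ZMod p) 0 ^ 2) (y := 0) ⟨rfl, Or.inl rfl⟩
  simpa [uu, sq, map_mul] using h

lemma v_mul_v : vv p * vv p = 0 := by
  have h := RingQuot.mkAlgHom_rel (ZMod p) (s := relUV p)
    (x := ι (ZMod p) 1 ^ 2) (y := 0) ⟨rfl, Or.inr (Or.inl rfl)⟩
  simpa [vv, sq, map_mul] using h

lemma u_mul_v : uu p * vv p = 0 := by
  have h := RingQuot.mkAlgHom_rel (ZMod p) (s := relUV p)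
    (x := ι (ZMod p) 0 * ι (ZMod p) 1) (y := 0) ⟨rfl, Or.inr (Or.inr rfl)⟩
  simpa [uu, vv, map_mul] using h

lemma u_mul_vu : uu p * (vv p * uu p) = 0 := by
  rw [← mul_assoc, u_mul_v, zero_mul]
lemma vu_mul_u : (vv p * uu p) * uu p = 0 := by
  rw [mul_assoc, u_mul_u, mul_zero]
lemma v_mul_vu : vv p * (vv p * uu p) = 0 := by
  rw [← mul_assoc, v_mul_v, zero_mul]
lemma vu_mul_v : (vv p * uu p) * vv p = 0 := by
  rw [mul_assoc, u_mul_v, mul_zero]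
lemma vu_mul_vu : (vv p * uu p) * (vv p * uu p) = 0 := by
  rw [mul_assoc, u_mul_vu, mul_zero]

/-- the map from the abstract five-element monoid to `UVRing p`. -/
noncomputable def hmap : L5 → UVRing p
  | L5.e => 1
  | L5.a => uu p
  | L5.b => vv p
  | L5.w => vv p * uu p
  | L5.z => 0

lemma L5mul_def (x y : L5) : x * y = L5.mul5 x y := rfl

lemma hmap_mul : ∀ x y : L5, hmap p (x * y) = hmap p x * hmap p y := by
  rintro ⟨⟩ ⟨⟩ <;>
    simp [hmap, L5mul_def, L5.mul5,
      u_mul_u, v_mul_v, u_mul_v, u_mul_vu, vu_mul_u, v_mul_vu, vu_mul_v, vu_mul_vu]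

/-- bundled monoid hom -/
noncomputable def hm : L5 →* UVRing p := ⟨⟨hmap p, rfl⟩, hmap_mul p⟩



noncomputable def gvec : Fin 4 → UVRing p := ![1, uu p, vv p, vv p * uu p]

def mulco (a b : Fin 4 → ZMod p) : Fin 4 → ZMod p :=
  ![a 0 * b 0, a 0 * b 1 + a 1 * b 0, a 0 * b 2 + a 2 * b 0,
    a 0 * b 3 + a 3 * b 0 + a 2 * b 1]

lemma repr_mul (a b : Fin 4 → ZMod p) :
    (∑ j, a j • gvec p j) * (∑ j, b j • gvec p j) = ∑ j, mulco p a b j • gvec p j := by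
  rw [Fin.sum_univ_four, Fin.sum_univ_four, Fin.sum_univ_four]
  simp only [gvec, mulco, Matrix.cons_val_zero, Matrix.cons_val_one, Matrix.head_cons,
    Matrix.cons_val_two, Matrix.tail_cons, Matrix.cons_val_three]
  simp only [add_mul, mul_add, smul_mul_assoc, mul_smul_comm, smul_smul,
    u_mul_u, v_mul_v, u_mul_v, u_mul_vu, vu_mul_u, v_mul_vu, vu_mul_v, vu_mul_vu,
    one_mul, mul_one, smul_zero, add_zero, zero_add]
  module

lemma exists_repr (x : UVRing p) : ∃ co : Fin 4 → ZMod p, x = ∑ j, co j • gvec p j := by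
  obtain ⟨y, rfl⟩ := RingQuot.mkAlgHom_surjective (ZMod p) (relUV p) x
  induction y using FreeAlgebra.induction with
  | grade0 r =>
    refine ⟨![r, 0, 0, 0], ?_⟩
    rw [Fin.sum_univ_four]
    simp [gvec, Algebra.algebraMap_eq_smul_one, AlgHom.commutes]
  | grade1 i =>
    fin_cases i
    · refine ⟨![0, 1, 0, 0], ?_⟩
      rw [Fin.sum_univ_four]
      simp [gvec, uu]
    · refine ⟨![0, 0, 1, 0], ?_⟩
      rw [Fin.sum_univ_four]
      simp [gvec, vv]
  | mul x y hx hy =>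
    obtain ⟨a, ha⟩ := hx
    obtain ⟨b, hb⟩ := hy
    exact ⟨mulco p a b, by rw [map_mul, ha, hb, repr_mul]⟩
  | add x y hx hy =>
    obtain ⟨a, ha⟩ := hx
    obtain ⟨b, hb⟩ := hy
    exact ⟨a + b, by rw [map_add, ha, hb, ← Finset.sum_add_distrib]; simp [add_smul]⟩

end UVAux

namespace UVAux

def lab : Fin 4 → L5 := ![L5.e, L5.a, L5.b, L5.w]

lemma gvec_eq_hmap (p : ℕ) (j : Fin 4) : gvec p j = hmap p (lab j) := by
  fin_cases j <;> rfl

lemma hm_apply (p : ℕ) (x : L5) : hm p x = hmap p x := rfl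

theorem identity_on_UVRing (p : ℕ) (m : ℕ) (c : Equiv.Perm (Fin m) → ℤ)
    (h1 : (p : ℤ) ∣ ∑ σ : Equiv.Perm (Fin m), c σ)
    (h2 : ∀ i j : Fin m, i < j →
      (p : ℤ) ∣ ∑ σ ∈ Finset.filter
        (fun σ : Equiv.Perm (Fin m) => σ⁻¹ i < σ⁻¹ j) Finset.univ, c σ)
    (r : Fin m → UVRing p) :
    ∑ σ : Equiv.Perm (Fin m), c σ • (List.ofFn fun t => r (σ t)).prod = 0 := by
  have hc1 : ∑ σ : Equiv.Perm (Fin m), ((c σ : ZMod p)) = 0 := by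
    have := (ZMod.intCast_zmod_eq_zero_iff_dvd _ p).2 h1
    push_cast at this
    exact this
  have hkey : ∀ i j : Fin m, i ≠ j →
      ∑ σ ∈ Finset.filter (fun σ : Equiv.Perm (Fin m) => σ⁻¹ i < σ⁻¹ j) Finset.univ,
        ((c σ : ZMod p)) = 0 := by
    intro i j hij
    have hcast : ∀ i j : Fin m, i < j →
        ∑ σ ∈ Finset.filter (fun σ : Equiv.Perm (Fin m) => σ⁻¹ i < σ⁻¹ j) Finset.univ,
          ((c σ : ZMod p)) = 0 := by
      intro i j h
      have := (ZMod.intCast_zmod_eq_zero_iff_dvd _ p).2 (h2 i j h)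
      push_cast at this
      exact this
    rcases lt_or_gt_of_ne hij with h | h
    · exact hcast i j h
    · have hsplit := Finset.sum_filter_add_sum_filter_not Finset.univ
        (fun σ : Equiv.Perm (Fin m) => σ⁻¹ j < σ⁻¹ i) (fun σ => ((c σ : ZMod p)))
      have hfe : Finset.filter (fun σ : Equiv.Perm (Fin m) => ¬ σ⁻¹ j < σ⁻¹ i) Finset.univ
          = Finset.filter (fun σ : Equiv.Perm (Fin m) => σ⁻¹ i < σ⁻¹ j) Finset.univ := by
        ext σ
        simp only [Finset.mem_filter, Finset.mem_univ, true_and]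
        have hne : σ⁻¹ i ≠ σ⁻¹ j := fun hh => hij ((σ⁻¹ : Equiv.Perm (Fin m)).injective hh)
        constructor
        · intro hh
          exact (not_lt.1 hh).lt_of_ne hne
        · intro hh
          exact not_lt.2 hh.le
      rw [hfe, hcast j i h, zero_add, hc1] at hsplit
      exact hsplit
  -- the multilinear map
  set T : MultilinearMap (ZMod p) (fun _ : Fin m => UVRing p) (UVRing p) :=
    ∑ σ : Equiv.Perm (Fin m), ((c σ : ZMod p)) •
      ((MultilinearMap.mkPiAlgebraFin (ZMod p) m (UVRing p)).domDomCongr σ) with hT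
  have hTapp : ∀ f : Fin m → UVRing p,
      T f = ∑ σ : Equiv.Perm (Fin m), ((c σ : ZMod p)) •
        (List.ofFn fun t => f (σ t)).prod := by
    intro f
    rw [hT]
    rw [MultilinearMap.sum_apply]
    refine Finset.sum_congr rfl fun σ _ => ?_
    rw [MultilinearMap.smul_apply, MultilinearMap.domDomCongr_apply,
      MultilinearMap.mkPiAlgebraFin_apply]
  have hzsmul : ∀ σ : Equiv.Perm (Fin m),
      c σ • (List.ofFn fun t => r (σ t)).prod
        = ((c σ : ZMod p)) • (List.ofFn fun t => r (σ t)).prod := by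
    intro σ
    exact (Int.cast_smul_eq_zsmul _ _ _).symm
  rw [Finset.sum_congr rfl fun σ _ => hzsmul σ, ← hTapp r]
  -- expand each r t in the basis
  have hrep := fun t => exists_repr p (r t)
  choose co hco using hrep
  have hr : r = fun t => ∑ j : Fin 4, co t j • gvec p j := funext hco
  rw [hr, T.map_sum]
  refine Finset.sum_eq_zero fun w _ => ?_
  rw [T.map_smul_univ]
  -- reduce to basis vectors
  suffices hW : T (fun t => gvec p (w t)) = 0 by rw [hW, smul_zero]
  -- pass to the five-element monoid
  simp only [gvec_eq_hmap]
  set e' : Fin m → L5 := fun t => lab (w t) with he'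
  have hprodL5 : ∀ σ : Equiv.Perm (Fin m),
      (List.ofFn fun t => hmap p (e' (σ t))).prod
        = hm p ((List.ofFn fun t => e' (σ t)).prod) := by
    intro σ
    rw [map_list_prod, List.map_ofFn]
    rfl
  rw [hTapp]
  change ∑ σ : Equiv.Perm (Fin m), ((c σ : ZMod p)) • (List.ofFn fun t => hmap p (e' (σ t))).prod = 0
  simp only [hprodL5]
  classical
  set s : Finset (Fin m) := Finset.univ.filter (fun t => e' t ≠ L5.e) with hs
  by_cases hbig : 3 ≤ s.card
  · -- every product vanishes
    have hz : ∀ σ : Equiv.Perm (Fin m), (List.ofFn fun t => e' (σ t)).prod = L5.z := by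
      intro σ
      apply L5.eq_z_of_ω
      refine le_trans ?_ (L5.ω_prod _)
      have hmap' : (List.ofFn fun t => e' (σ t)).map L5.ω
          = List.ofFn fun t => L5.ω (e' (σ t)) := by
        rw [List.map_ofFn]; rfl
      rw [hmap', List.sum_ofFn]
      have hre : ∑ t : Fin m, L5.ω (e' (σ t)) = ∑ t : Fin m, L5.ω (e' t) :=
        Equiv.sum_comp σ (fun t => L5.ω (e' t))
      rw [hre]
      have h3 : (3 : ℕ) ≤ ∑ t : Fin m, L5.ω (e' t) := by
        calc (3 : ℕ) ≤ s.card := hbig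
        _ = ∑ t ∈ s, 1 := (Finset.card_eq_sum_ones s).trans rfl
        _ ≤ ∑ t ∈ s, L5.ω (e' t) := Finset.sum_le_sum fun t ht => by
            exact L5.one_le_ω _ (by simpa [hs] using ht)
        _ ≤ ∑ t : Fin m, L5.ω (e' t) :=
            Finset.sum_le_sum_of_subset (Finset.filter_subset _ _)
      omega
    simp only [hz]
    simp [hm_apply, hmap]
  · have hcard : s.card = 0 ∨ s.card = 1 ∨ s.card = 2 := by omega
    rcases hcard with h0 | h1c | h2c
    · -- all ones
      have hall : ∀ t, e' t = L5.e := by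
        intro t
        by_contra ht
        have : t ∈ s := by simp [hs, ht]
        simp [Finset.card_eq_zero.1 h0] at this
      have hone : ∀ σ : Equiv.Perm (Fin m),
          (List.ofFn fun t => e' (σ t)).prod = 1 :=
        fun σ => ofFn_prod_eq_one _ (fun t => hall (σ t))
      simp only [hone]
      rw [← Finset.sum_smul, hc1, zero_smul]
    · obtain ⟨i, hi⟩ := Finset.card_eq_one.1 h1c
      have hout : ∀ t, t ≠ i → e' t = L5.e := by
        intro t ht
        by_contra hne
        have : t ∈ s := by simp [hs, hne]
        rw [hi] at this
        exact ht (Finset.mem_singleton.1 this)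
      have hone : ∀ σ : Equiv.Perm (Fin m),
          (List.ofFn fun t => e' (σ t)).prod = e' i := by
        intro σ
        have := ofFn_prod_single (fun t => e' (σ t)) (σ⁻¹ i) (fun t ht => by
          refine hout (σ t) fun hh => ht ?_
          rw [← hh]; simp)
        simpa using this
      simp only [hone]
      rw [← Finset.sum_smul, hc1, zero_smul]
    · obtain ⟨i, j, hij, hsij⟩ := Finset.card_eq_two.1 h2c
      have hout : ∀ t, t ≠ i → t ≠ j → e' t = L5.e := by
        intro t ht1 ht2
        by_contra hne
        have : t ∈ s := by simp [hs, hne]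
        rw [hsij] at this
        rcases Finset.mem_insert.1 this with h | h
        · exact ht1 h
        · exact ht2 (Finset.mem_singleton.1 h)
      have hprod2 : ∀ σ : Equiv.Perm (Fin m),
          (List.ofFn fun t => e' (σ t)).prod
            = if σ⁻¹ i < σ⁻¹ j then e' i * e' j else e' j * e' i := by
        intro σ
        have hne : σ⁻¹ i ≠ σ⁻¹ j :=
          fun hh => hij ((σ⁻¹ : Equiv.Perm (Fin m)).injective hh)
        have houtσ : ∀ t, t ≠ σ⁻¹ i → t ≠ σ⁻¹ j → e' (σ t) = L5.e := by
          intro t ht1 ht2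
          refine hout (σ t) (fun hh => ht1 ?_) (fun hh => ht2 ?_) <;>
            · rw [← hh]; simp
        by_cases hlt : σ⁻¹ i < σ⁻¹ j
        · rw [if_pos hlt]
          have := ofFn_prod_pair (fun t => e' (σ t)) (σ⁻¹ i) (σ⁻¹ j) hlt
            (fun t h1' h2' => houtσ t h1' h2')
          simpa using this
        · rw [if_neg hlt]
          have hlt' : σ⁻¹ j < σ⁻¹ i := (not_lt.1 hlt).lt_of_ne (Ne.symm hne)
          have := ofFn_prod_pair (fun t => e' (σ t)) (σ⁻¹ j) (σ⁻¹ i) hlt'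
            (fun t h1' h2' => houtσ t h2' h1')
          simpa using this
      simp only [hprod2]
      rw [← Finset.sum_filter_add_sum_filter_not Finset.univ
        (fun σ : Equiv.Perm (Fin m) => σ⁻¹ i < σ⁻¹ j)]
      have hA : ∑ σ ∈ Finset.filter (fun σ : Equiv.Perm (Fin m) => σ⁻¹ i < σ⁻¹ j)
          Finset.univ, ((c σ : ZMod p)) •
            hm p (if σ⁻¹ i < σ⁻¹ j then e' i * e' j else e' j * e' i)
          = 0 := by
        rw [Finset.sum_congr rfl (fun σ hσ => by
          rw [if_pos (Finset.mem_filter.1 hσ).2])]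
        rw [← Finset.sum_smul, hkey i j hij, zero_smul]
      have hB : ∑ σ ∈ Finset.filter (fun σ : Equiv.Perm (Fin m) => ¬ σ⁻¹ i < σ⁻¹ j)
          Finset.univ, ((c σ : ZMod p)) •
            hm p (if σ⁻¹ i < σ⁻¹ j then e' i * e' j else e' j * e' i)
          = 0 := by
        rw [Finset.sum_congr rfl (fun σ hσ => by
          rw [if_neg (Finset.mem_filter.1 hσ).2])]
        rw [← Finset.sum_smul]
        have hfe : Finset.filter (fun σ : Equiv.Perm (Fin m) => ¬ σ⁻¹ i < σ⁻¹ j) Finset.univ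
            = Finset.filter (fun σ : Equiv.Perm (Fin m) => σ⁻¹ j < σ⁻¹ i) Finset.univ := by
          ext σ
          simp only [Finset.mem_filter, Finset.mem_univ, true_and]
          have hne : σ⁻¹ i ≠ σ⁻¹ j :=
            fun hh => hij ((σ⁻¹ : Equiv.Perm (Fin m)).injective hh)
          constructor
          · intro hh
            exact (not_lt.1 hh).lt_of_ne (Ne.symm hne)
          · intro hh
            exact not_lt.2 hh.le
        rw [hfe, hkey j i (Ne.symm hij), zero_smul]
      rw [hA, hB, add_zero]

end UVAux

namespace UVAux

lemma vu_ne_zero (p : ℕ) (hp : p.Prime) : vv p * uu p ≠ 0 := by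
  haveI : Fact p.Prime := ⟨hp⟩
  set E : Fin 2 → Matrix (Fin 3) (Fin 3) (ZMod p) :=
    ![Matrix.single 1 2 1, Matrix.single 0 1 1] with hE
  set f : FreeAlgebra (ZMod p) (Fin 2) →ₐ[ZMod p] Matrix (Fin 3) (Fin 3) (ZMod p) :=
    FreeAlgebra.lift (ZMod p) E with hf
  have hrel : ∀ ⦃x y⦄, relUV p x y → f x = f y := by
    rintro x y ⟨rfl, h | h | h⟩ <;> subst h <;>
      simp [hf, sq, map_mul, FreeAlgebra.lift_ι_apply, hE,
        Matrix.single_mul_single_of_ne, Fin.ext_iff]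
  set φ := RingQuot.liftAlgHom (ZMod p) (s := relUV p) ⟨f, hrel⟩ with hφ
  intro hcon
  have h1 : φ (vv p * uu p) = Matrix.single (0 : Fin 3) 2 1 := by
    rw [map_mul]
    rw [vv, uu, hφ, RingQuot.liftAlgHom_mkAlgHom_apply, RingQuot.liftAlgHom_mkAlgHom_apply]
    simp [hf, FreeAlgebra.lift_ι_apply, hE, Matrix.single_mul_single_same]
  rw [hcon, map_zero] at h1
  have := congrFun (congrFun h1 0) 2
  rw [Matrix.single_apply_same] at this
  simp at this

end UVAux


section Forward
variable {R : Type u} [Ring R]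

lemma exists_prime_ann {x : R} (hx : x ≠ 0) :
    ∃ P : ℕ, P.Prime ∧ ∀ n : ℤ, n • x = 0 → (P : ℤ) ∣ n := by
  by_cases hfin : ∃ n : ℤ, n ≠ 0 ∧ n • x = 0
  · have hfo : IsOfFinAddOrder x := isOfFinAddOrder_iff_zsmul_eq_zero.2 hfin
    have hd1 : addOrderOf x ≠ 1 := by
      intro h
      exact hx (AddMonoid.addOrderOf_eq_one_iff.1 h)
    refine ⟨(addOrderOf x).minFac, Nat.minFac_prime hd1, fun n hn => ?_⟩
    have hdvd : (addOrderOf x : ℤ) ∣ n := addOrderOf_dvd_iff_zsmul_eq_zero.2 hn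
    exact dvd_trans (Int.natCast_dvd_natCast.2 (Nat.minFac_dvd _)) hdvd
  · push_neg at hfin
    refine ⟨2, Nat.prime_two, fun n hn => ?_⟩
    by_cases h0 : n = 0
    · simp [h0]
    · exact absurd hn (hfin n h0)

end Forward


open UVAux


/-- Theorem 5.1: a set `𝒮` of homogeneous multilinear polynomials (the polynomial with `m`
variables and coefficients `c : S_m → ℤ` being `Σ_σ c_σ X_{σ(1)}⋯X_{σ(m)}`, recorded here
as `c ∈ 𝒮 m`) consists of identities of some noncommutative ring iff there is a single
prime `p` dividing `P(1,…,1)` and all `Θ_{i,j}(P)` for every `P ∈ 𝒮`; moreover, in that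
case every element of `𝒮` is an identity for `𝔽_p⟨U,V⟩/(U², V², UV)`. -/
theorem multilinear_identities_noncomm
    (𝒮 : ∀ m : ℕ, Set (Equiv.Perm (Fin m) → ℤ))
    (h𝒮 : ∀ m, ∀ c ∈ 𝒮 m, 2 ≤ m) :
    ((∃ (R : Type u) (_ : Ring R), (∃ a b : R, a * b ≠ b * a) ∧
        ∀ m, ∀ c ∈ 𝒮 m, ∀ r : Fin m → R,
          ∑ σ : Equiv.Perm (Fin m), c σ • (List.ofFn fun t => r (σ t)).prod = 0) ↔
      (∃ p : ℕ, p.Prime ∧ ∀ m, ∀ c ∈ 𝒮 m,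
        ((p : ℤ) ∣ ∑ σ : Equiv.Perm (Fin m), c σ) ∧
        ∀ i j : Fin m, i < j →
          (p : ℤ) ∣ ∑ σ ∈ Finset.filter
            (fun σ : Equiv.Perm (Fin m) => σ⁻¹ i < σ⁻¹ j) Finset.univ, c σ)) ∧
    ∀ p : ℕ, p.Prime →
      (∀ m, ∀ c ∈ 𝒮 m,
        ((p : ℤ) ∣ ∑ σ : Equiv.Perm (Fin m), c σ) ∧
        ∀ i j : Fin m, i < j →
          (p : ℤ) ∣ ∑ σ ∈ Finset.filter
            (fun σ : Equiv.Perm (Fin m) => σ⁻¹ i < σ⁻¹ j) Finset.univ, c σ) →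
      ∀ m, ∀ c ∈ 𝒮 m, ∀ r : Fin m → UVRing p,
        ∑ σ : Equiv.Perm (Fin m), c σ • (List.ofFn fun t => r (σ t)).prod = 0 := by
  classical
  have moreover : ∀ p : ℕ,
      (∀ m, ∀ c ∈ 𝒮 m,
        ((p : ℤ) ∣ ∑ σ : Equiv.Perm (Fin m), c σ) ∧
        ∀ i j : Fin m, i < j →
          (p : ℤ) ∣ ∑ σ ∈ Finset.filter
            (fun σ : Equiv.Perm (Fin m) => σ⁻¹ i < σ⁻¹ j) Finset.univ, c σ) →
      ∀ m, ∀ c ∈ 𝒮 m, ∀ r : Fin m → UVRing p,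
        ∑ σ : Equiv.Perm (Fin m), c σ • (List.ofFn fun t => r (σ t)).prod = 0 := by
    intro p hcond m c hc r
    exact identity_on_UVRing p m c (hcond m c hc).1 (fun i j hij => (hcond m c hc).2 i j hij) r
  constructor
  · constructor
    · rintro ⟨R, _, ⟨a, b, hab⟩, hid⟩
      have hx : a * b - b * a ≠ 0 := sub_ne_zero.2 hab
      obtain ⟨P, hP, hPd⟩ := exists_prime_ann hx
      refine ⟨P, hP, fun m c hc => ?_⟩
      have hN1 : (∑ σ : Equiv.Perm (Fin m), c σ) • (1 : R) = 0 := by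
        have h := hid m c hc (fun _ => 1)
        rw [Finset.sum_smul]
        simpa [ofFn_prod_eq_one (fun _ : Fin m => (1 : R)) (fun _ => rfl)] using h
      have hNx : ∀ y : R, (∑ σ : Equiv.Perm (Fin m), c σ) • y = 0 := by
        intro y
        calc (∑ σ : Equiv.Perm (Fin m), c σ) • y
            = ((∑ σ : Equiv.Perm (Fin m), c σ) • (1 : R)) * y := by
              rw [smul_mul_assoc, one_mul]
          _ = 0 := by rw [hN1, zero_mul]
      refine ⟨hPd _ (hNx (a * b - b * a)), fun i j hij => ?_⟩
      apply hPd
      have hijne : i ≠ j := ne_of_lt hij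
      set r : Fin m → R := fun t => if t = i then a else if t = j then b else 1 with hr
      have hri : r i = a := by simp [hr]
      have hrj : r j = b := by simp [hr, hijne.symm]
      have hrout : ∀ t, t ≠ i → t ≠ j → r t = 1 := by
        intro t h1' h2'
        simp [hr, h1', h2']
      have hid' := hid m c hc r
      have hprod : ∀ σ : Equiv.Perm (Fin m), (List.ofFn fun t => r (σ t)).prod
          = if σ⁻¹ i < σ⁻¹ j then a * b else b * a := by
        intro σ
        have hne : σ⁻¹ i ≠ σ⁻¹ j :=
          fun hh => hijne ((σ⁻¹ : Equiv.Perm (Fin m)).injective hh)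
        have houtσ : ∀ t, t ≠ σ⁻¹ i → t ≠ σ⁻¹ j → r (σ t) = 1 := by
          intro t ht1 ht2
          refine hrout (σ t) (fun hh => ht1 ?_) (fun hh => ht2 ?_) <;>
            · rw [← hh]; simp
        by_cases hlt : σ⁻¹ i < σ⁻¹ j
        · rw [if_pos hlt]
          have := ofFn_prod_pair (fun t => r (σ t)) (σ⁻¹ i) (σ⁻¹ j) hlt houtσ
          simpa [hri, hrj] using this
        · rw [if_neg hlt]
          have hlt' : σ⁻¹ j < σ⁻¹ i := (not_lt.1 hlt).lt_of_ne (Ne.symm hne)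
          have := ofFn_prod_pair (fun t => r (σ t)) (σ⁻¹ j) (σ⁻¹ i) hlt'
            (fun t h1' h2' => houtσ t h2' h1')
          simpa [hri, hrj] using this
      rw [Finset.sum_congr rfl (fun σ _ => by rw [hprod σ])] at hid'
      set Θ : ℤ := ∑ σ ∈ Finset.filter
        (fun σ : Equiv.Perm (Fin m) => σ⁻¹ i < σ⁻¹ j) Finset.univ, c σ with hΘ
      set Ξ : ℤ := ∑ σ ∈ Finset.filter
        (fun σ : Equiv.Perm (Fin m) => ¬ σ⁻¹ i < σ⁻¹ j) Finset.univ, c σ with hΞ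
      have hsplit : Θ • (a * b) + Ξ • (b * a) = 0 := by
        have h1 : ∀ σ ∈ Finset.filter
            (fun σ : Equiv.Perm (Fin m) => σ⁻¹ i < σ⁻¹ j) Finset.univ,
            c σ • (a * b) = c σ • (if σ⁻¹ i < σ⁻¹ j then a * b else b * a) := by
          intro σ hσ
          rw [if_pos (Finset.mem_filter.1 hσ).2]
        have h2 : ∀ σ ∈ Finset.filter
            (fun σ : Equiv.Perm (Fin m) => ¬ σ⁻¹ i < σ⁻¹ j) Finset.univ,
            c σ • (b * a) = c σ • (if σ⁻¹ i < σ⁻¹ j then a * b else b * a) := by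
          intro σ hσ
          rw [if_neg (Finset.mem_filter.1 hσ).2]
        rw [hΘ, hΞ, Finset.sum_smul, Finset.sum_smul,
          Finset.sum_congr rfl h1, Finset.sum_congr rfl h2,
          Finset.sum_filter_add_sum_filter_not]
        exact hid'
      have hΘΞ : Θ + Ξ = ∑ σ : Equiv.Perm (Fin m), c σ :=
        Finset.sum_filter_add_sum_filter_not _ _ _
      have hrw : Θ • (a * b - b * a)
          = (Θ • (a * b) + Ξ • (b * a)) - (Θ + Ξ) • (b * a) := by
        rw [smul_sub, add_smul]
        abel
      rw [hrw, hsplit, hΘΞ, hNx, sub_zero]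
    · rintro ⟨p, hp, hcond⟩
      haveI : Fact p.Prime := ⟨hp⟩
      refine ⟨ULift (UVRing p), inferInstance,
        ⟨ULift.up (uu p), ULift.up (vv p), ?_⟩, ?_⟩
      · intro h
        have hd : uu p * vv p = vv p * uu p := congrArg ULift.down h
        exact vu_ne_zero p hp (by rw [← hd]; exact u_mul_v p)
      · intro m c hc r
        have hdown := moreover p hcond m c hc (fun t => (r t).down)
        apply (ULift.ringEquiv (R := UVRing p)).injective
        rw [map_zero, map_sum]
        have hcongr : ∀ σ ∈ (Finset.univ : Finset (Equiv.Perm (Fin m))),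
            (ULift.ringEquiv (R := UVRing p)) (c σ • (List.ofFn fun t => r (σ t)).prod)
            = c σ • (List.ofFn fun t => (r (σ t)).down).prod := by
          intro σ _
          rw [map_zsmul, map_list_prod, List.map_ofFn]
          rfl
        rw [Finset.sum_congr rfl hcongr]
        exact hdown
  · intro p _ hcond
    exact moreover p hcond
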